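/- arXiv:1803.05782 — 2 statements merged into one kernel-verified Lean document; each statement's English description precedes it below -/
import Mathlib

section
/- With the setup below, for all sufficiently large p ∈ ℕ and every g ∈ G₁: 2|g| + |c^p| − 8C' − 8K ≤ |g⁻¹c^p g| ≤ 2|g| + |c^p|. -/
open Metric Set Filter Pointwise

namespace ACcogrowth

variable {X : Type*} [MetricSpace X]

/-- A map `γ` is a geodesic when restricted to the interval `[a,b]`. -/
def IsGeodesicOn (γ : ℝ → X) (a b : ℝ) : Prop :=
  ∀ s ∈ Set.Icc a b, ∀ t ∈ Set.Icc a b, dist (γ s) (γ t) = |s - t|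

/-- `X` is a geodesic metric space: any two points are joined by a geodesic. -/
def GeodesicSpace (X : Type*) [MetricSpace X] : Prop :=
  ∀ x y : X, ∃ γ : ℝ → X, IsGeodesicOn γ 0 (dist x y) ∧ γ 0 = x ∧ γ (dist x y) = y

/-- The nearest-point projection of `x` to `Y`. -/
def proj (Y : Set X) (x : X) : Set X := {y ∈ Y | dist x y = Metric.infDist x Y}

/-- The projection of a set `Z` to `Y`. -/
def projSet (Y Z : Set X) : Set X := ⋃ z ∈ Z, proj Y z

/-- The projection distance `d^π_Y(Z,Z')`. -/
noncomputable def dpi (Y Z Z' : Set X) : ℝ := Metric.diam (projSet Y Z ∪ projSet Y Z')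

/-- `Y` is `C`-strongly contracting. -/
def StronglyContractingWith (C : ℝ) (Y : Set X) : Prop :=
  0 ≤ C ∧ ∀ x x' : X, dist x x' ≤ Metric.infDist x Y →
    Metric.diam (proj Y x ∪ proj Y x') ≤ C

/-- `Y` is strongly contracting. -/
def StronglyContracting (Y : Set X) : Prop := ∃ C, StronglyContractingWith C Y

variable {G : Type*} [Group G] [MulAction G X]

/-- The action of `G` on `X` is (metrically) proper. -/
def ProperAction (G : Type*) [Group G] [MulAction G X] (o : X) : Prop :=
  ∀ (x : X) (r : ℝ), {g : G | dist x (g • o) ≤ r}.Finite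

/-- The orbit of the basepoint under the cyclic group generated by `c`. -/
def cOrbit (c : G) (o : X) : Set X := Set.range fun i : ℤ => c ^ i • o

/-- `c` is a strongly contracting element for the action. -/
def IsStronglyContractingElement (c : G) (o : X) : Prop :=
  ¬ IsOfFinOrder c ∧ StronglyContracting (cOrbit c o)

/-- The elementary closure `E(c)`: elements moving `⟨c⟩.o` a finite Hausdorff distance. -/
def Ec (c : G) (o : X) : Set G :=
  {g : G | EMetric.hausdorffEdist (g • cOrbit c o) (cOrbit c o) ≠ ⊤}

/-- The axis `𝓔 = E(c).o`. -/
def Esub (c : G) (o : X) : Set X := (· • o) '' Ec c o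

/-- The family of distinct `G`-translates of `𝓔`. -/
def translates (c : G) (o : X) : Set (Set X) := Set.range fun g : G => g • Esub c o

/-- Axiom (P0) with constant `θ` for the family of translates. -/
def AxiomP0 (c : G) (o : X) (θ : ℝ) : Prop :=
  ∀ 𝓨 ∈ translates c o, ∀ 𝓧 ∈ translates c o, 𝓧 ≠ 𝓨 → dpi 𝓨 𝓧 𝓧 ≤ θ

/-- Axiom (P1) with constant `θ` for the family of translates. -/
def AxiomP1 (c : G) (o : X) (θ : ℝ) : Prop :=
  ∀ 𝓧 ∈ translates c o, ∀ 𝓨 ∈ translates c o, ∀ 𝓩 ∈ translates c o,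
    𝓧 ≠ 𝓨 → 𝓨 ≠ 𝓩 → 𝓧 ≠ 𝓩 → dpi 𝓨 𝓧 𝓩 > θ → dpi 𝓧 𝓨 𝓩 ≤ θ

/-- `C'` is a bounded-geodesic-image constant for all translates of `𝓔`. -/
def BGIconst (c : G) (o : X) (C' : ℝ) : Prop :=
  ∀ g : G, ∀ γ : ℝ → X, ∀ a b : ℝ, IsGeodesicOn γ a b →
    (∀ t ∈ Set.Icc a b, C' ≤ Metric.infDist (γ t) (g • Esub c o)) →
    Metric.diam (projSet (g • Esub c o) (γ '' Set.Icc a b)) ≤ C'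

/-- The set `G₁`. -/
def Gone (c : G) (o : X) (K : ℝ) : Set G :=
  {g : G | dpi (Esub c o) {o} {g • o} ≤ 2 * K ∧
    dpi (g • Esub c o) {o} {g • o} ≤ 2 * K ∧ g • Esub c o ≠ Esub c o}

/-- The set `G_{2,p}` of conjugates of `c^p` by elements of `G₁`. -/
def Gtwo (c : G) (o : X) (K : ℝ) (p : ℕ) : Set G :=
  (fun g : G => g⁻¹ * c ^ p * g) '' Gone c o K

/-- A subset `S` of `G` is `s`-separated (with respect to the orbit pseudo-metric). -/
def SeparatedSet (o : X) (s : ℝ) (S : Set G) : Prop :=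
  ∀ x ∈ S, ∀ y ∈ S, x ≠ y → s ≤ dist (x • o) (y • o)

/-- There is a geodesic from `x` to `y` passing within distance `D` of `z`. -/
def GeodesicPassesNear (x y z : X) (D : ℝ) : Prop :=
  ∃ γ : ℝ → X, IsGeodesicOn γ 0 (dist x y) ∧ γ 0 = x ∧ γ (dist x y) = y ∧
    ∃ t ∈ Set.Icc 0 (dist x y), dist (γ t) z ≤ D

/-- The shadowed subset `G'_{4,p,D}` of a given set `G₃`. -/
def Gfour' (c : G) (o : X) (G₃ : Set G) (p : ℕ) (D : ℝ) : Set G :=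
  {x ∈ G₃ | ∃ y ∈ G₃, y ≠ x ∧ GeodesicPassesNear o (x • o) ((y * c ^ (2 * p)) • o) D}

/-- The growth rate of a subset `H ⊆ G` with respect to the induced pseudo-metric. -/
noncomputable def growthRate (o : X) (H : Set G) : ℝ :=
  Filter.limsup
    (fun r : ℝ => Real.log (({h ∈ H | dist o (h • o) ≤ r}).ncard) / r) Filter.atTop

/-- The growth rate of a subset `B ⊆ X`. -/
noncomputable def growthRateX (o : X) (B : Set X) : ℝ :=
  Filter.limsup
    (fun r : ℝ => Real.log (({b ∈ B | dist o b ≤ r}).ncard) / r) Filter.atTop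

/-- `H` is divergent: its Poincaré series diverges at `s = δ_H`. -/
def Divergent (o : X) (H : Set G) : Prop :=
  ¬ Summable fun h : H => Real.exp (-(growthRate o H) * dist o ((h : G) • o))

/-- `G` has purely exponential growth with rate `δ`, shell width `Δ` and constant `A`. -/
def PurelyExponentialWith (G : Type*) [Group G] [MulAction G X] (o : X)
    (δ Δ A : ℝ) : Prop :=
  0 < δ ∧ 0 < Δ ∧ 1 ≤ A ∧ ∀ r : ℝ, 0 ≤ r →
    Real.exp (δ * r) / A ≤
        (({g : G | r < dist o (g • o) ∧ dist o (g • o) ≤ r + Δ}).ncard : ℝ) ∧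
    (({g : G | r < dist o (g • o) ∧ dist o (g • o) ≤ r + Δ}).ncard : ℝ) ≤
        A * Real.exp (δ * r)

/-- `G` has purely exponential growth. -/
def PurelyExponential (G : Type*) [Group G] [MulAction G X] (o : X) : Prop :=
  ∃ δ Δ A : ℝ, PurelyExponentialWith G o δ Δ A

/-- The tree's-worth map: `(g₁, …, g_k) ↦ (g₁ c g₂ c ⋯ g_k c).o`. -/
def treeMap (o : X) (c : G) (l : List G) : X := (l.map fun g => g * c).prod • o



section AuxLemmas

variable {G : Type*} [Group G] [MulAction G X]

private lemma real_le_of_forall_pos_le_add {a b : ℝ} (h : ∀ ε : ℝ, 0 < ε → a ≤ b + ε) :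
    a ≤ b := by
  by_contra hab
  push_neg at hab
  have := h ((a - b) / 2) (by linarith)
  linarith

lemma smul_cOrbit (c : G) (o : X) : c • cOrbit c o = cOrbit c o := by
  ext y
  constructor
  · rintro ⟨w, ⟨i, rfl⟩, rfl⟩
    exact ⟨1 + i, by show c ^ (1 + i) • o = c • c ^ i • o; rw [zpow_add, zpow_one, mul_smul]⟩
  · rintro ⟨i, rfl⟩
    refine ⟨c ^ (i - 1) • o, ⟨i - 1, rfl⟩, ?_⟩
    show c • c ^ (i - 1) • o = c ^ i • o
    rw [← mul_smul, ← zpow_one_add, add_sub_cancel]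

lemma mul_mem_Ec_iff [IsIsometricSMul G X] (c h : G) (o : X) :
    c * h ∈ Ec c o ↔ h ∈ Ec c o := by
  have key : EMetric.hausdorffEdist ((c * h) • cOrbit c o) (cOrbit c o)
      = EMetric.hausdorffEdist (h • cOrbit c o) (cOrbit c o) := by
    have h2 := EMetric.hausdorffEdist_image (Φ := (c • ·))
      (s := h • cOrbit c o) (t := cOrbit c o) (isometry_smul X c)
    rw [Set.image_smul, Set.image_smul, smul_cOrbit, ← mul_smul] at h2
    exact h2
  simp only [Ec, Set.mem_setOf_eq, key]

lemma one_mem_Ec (c : G) (o : X) : (1 : G) ∈ Ec c o := by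
  simp [Ec, EMetric.hausdorffEdist, Metric.hausdorffEDist_self]

lemma o_mem_Esub (c : G) (o : X) : o ∈ Esub c o :=
  ⟨1, one_mem_Ec c o, one_smul _ o⟩

lemma smul_Esub [IsIsometricSMul G X] (c : G) (o : X) : c • Esub c o = Esub c o := by
  ext y
  constructor
  · rintro ⟨w, ⟨h, hh, rfl⟩, rfl⟩
    refine ⟨c * h, (mul_mem_Ec_iff c h o).2 hh, ?_⟩
    show (c * h) • o = c • h • o
    rw [mul_smul]
  · rintro ⟨h, hh, rfl⟩
    refine ⟨(c⁻¹ * h) • o, ⟨c⁻¹ * h, ?_, rfl⟩, ?_⟩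
    · exact (mul_mem_Ec_iff c (c⁻¹ * h) o).1 (by rwa [mul_inv_cancel_left])
    · show c • (c⁻¹ * h) • o = h • o
      rw [← mul_smul, mul_inv_cancel_left]

lemma pow_smul_Esub [IsIsometricSMul G X] (c : G) (o : X) (p : ℕ) :
    c ^ p • Esub c o = Esub c o := by
  induction p with
  | zero => rw [pow_zero, one_smul]
  | succ n ih => rw [pow_succ', mul_smul, ih, smul_Esub]

lemma mem_proj_self {Y : Set X} {y : X} (h : y ∈ Y) : y ∈ proj Y y :=
  ⟨h, by rw [dist_self, Metric.infDist_zero_of_mem h]⟩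

lemma proj_isBounded (Y : Set X) (x : X) : Bornology.IsBounded (proj Y x) :=
  (Metric.isBounded_closedBall (x := x) (r := Metric.infDist x Y)).subset fun q hq => by
    rw [Metric.mem_closedBall, dist_comm]; exact le_of_eq hq.2

lemma projSet_singleton (Y : Set X) (w : X) : projSet Y {w} = proj Y w := by
  simp [projSet]

lemma mem_projSet_of_mem {Y Z : Set X} {z q : X} (hz : z ∈ Z) (hq : q ∈ proj Y z) :
    q ∈ projSet Y Z := Set.mem_biUnion hz hq

lemma infDist_smul' [IsIsometricSMul G X] (g : G) (x : X) (s : Set X) :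
    Metric.infDist (g • x) (g • s) = Metric.infDist x s := by
  simp [Metric.infDist, EMetric.infEdist_smul]

lemma proj_smul_mem [IsIsometricSMul G X] {Y : Set X} {x q : X} (h : q ∈ proj Y x) (g : G) :
    g • q ∈ proj (g • Y) (g • x) :=
  ⟨Set.smul_mem_smul_set h.1, by rw [dist_smul, infDist_smul']; exact h.2⟩

lemma proj_nonempty_of_proper [IsIsometricSMul G X] {o : X} (hproper : ProperAction G o)
    {S : Set G} (hS : S.Nonempty) (x : X) : (proj ((· • o) '' S) x).Nonempty := by
  set Y := (· • o) '' S with hY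
  have hYne : Y.Nonempty := hS.image _
  obtain ⟨y, hyY, hyd⟩ := (Metric.infDist_lt_iff hYne).1 (lt_add_one (Metric.infDist x Y))
  have hfin : {g : G | dist x (g • o) ≤ Metric.infDist x Y + 1}.Finite := hproper x _
  have hTfin : {g ∈ S | dist x (g • o) ≤ Metric.infDist x Y + 1}.Finite :=
    hfin.subset fun g hg => hg.2
  have hTne : {g ∈ S | dist x (g • o) ≤ Metric.infDist x Y + 1}.Nonempty := by
    obtain ⟨g, hgS, rfl⟩ := hyY
    exact ⟨g, hgS, hyd.le⟩
  obtain ⟨g₀, hg₀T, hmin⟩ := Set.exists_min_image _ (fun g => dist x (g • o)) hTfin hTne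
  refine ⟨g₀ • o, ⟨g₀, hg₀T.1, rfl⟩,
    le_antisymm ?_ (Metric.infDist_le_dist_of_mem ⟨g₀, hg₀T.1, rfl⟩)⟩
  by_contra hlt
  push_neg at hlt
  obtain ⟨y, hyY2, hy2⟩ := (Metric.infDist_lt_iff hYne).1 hlt
  obtain ⟨g, hgS, rfl⟩ := hyY2
  have hgT : g ∈ {g ∈ S | dist x (g • o) ≤ Metric.infDist x Y + 1} :=
    ⟨hgS, by linarith [hg₀T.2]⟩
  have := hmin g hgT
  linarith

lemma proj_Esub_nonempty [IsIsometricSMul G X] {o : X} (hproper : ProperAction G o)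
    (c : G) (x : X) : (proj (Esub c o) x).Nonempty :=
  proj_nonempty_of_proper hproper ⟨1, one_mem_Ec c o⟩ x

lemma projSet_geo_isBounded (Y : Set X) {γ : ℝ → X} {a b : ℝ} (hγ : IsGeodesicOn γ a b) :
    Bornology.IsBounded (projSet Y (γ '' Set.Icc a b)) := by
  refine (Metric.isBounded_closedBall (x := γ a)
    (r := Metric.infDist (γ a) Y + 2 * (b - a))).subset ?_
  rintro q hq
  simp only [projSet, Set.mem_iUnion, exists_prop] at hq
  obtain ⟨z, ⟨t, ht, rfl⟩, hqz⟩ := hq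
  have hab : a ≤ b := le_trans ht.1 ht.2
  have hta : dist (γ t) (γ a) = |t - a| := hγ t ht a ⟨le_refl a, hab⟩
  have h1 : |t - a| ≤ b - a := by
    rw [abs_of_nonneg (by linarith [ht.1])]
    linarith [ht.2]
  have h2 : dist (γ t) q = Metric.infDist (γ t) Y := hqz.2
  have h3 : Metric.infDist (γ t) Y ≤ Metric.infDist (γ a) Y + dist (γ t) (γ a) :=
    Metric.infDist_le_infDist_add_dist
  have h4 : dist q (γ a) ≤ dist q (γ t) + dist (γ t) (γ a) := dist_triangle _ _ _
  rw [Metric.mem_closedBall]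
  rw [dist_comm q (γ t)] at h4
  linarith

end AuxLemmas

/-- **Lemma.** For all sufficiently large `p` and every `g ∈ G₁`:
`2|g| + |c^p| − 8C' − 8K ≤ |g⁻¹ c^p g| ≤ 2|g| + |c^p|`. -/
theorem norm_conjugate_estimate
    {G : Type*} [Group G] {X : Type*} [MetricSpace X]
    [MulAction G X] [IsIsometricSMul G X] (o : X)
    (hgeo : GeodesicSpace X)
    (hproper : ProperAction G o)
    (c : G) (hc : IsStronglyContractingElement c o)
    (C C' K : ℝ)
    (hC : ∀ g : G, StronglyContractingWith C (g • Esub c o))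
    (hCC' : C ≤ C') (hBGI : BGIconst c o C')
    (hK : K > C)
    (hnorm : Filter.Tendsto (fun p : ℕ => dist o (c ^ p • o)) Filter.atTop Filter.atTop) :
    ∃ P : ℕ, ∀ p ≥ P, ∀ g ∈ Gone c o K,
      2 * dist o (g • o) + dist o (c ^ p • o) - 8 * C' - 8 * K ≤
          dist o ((g⁻¹ * c ^ p * g) • o) ∧
      dist o ((g⁻¹ * c ^ p * g) • o) ≤ 2 * dist o (g • o) + dist o (c ^ p • o) := by
  classical
  obtain ⟨P, hP⟩ := Filter.eventually_atTop.1 (Filter.tendsto_atTop.1 hnorm (4 * K + C' + 1))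
  refine ⟨P, fun p hp g hg => ?_⟩
  obtain ⟨hg1, hg2, hg3⟩ := hg
  have hC0 : 0 ≤ C := (hC 1).1
  have hC'0 : 0 ≤ C' := le_trans hC0 hCC'
  have hK0 : 0 ≤ K := le_of_lt (lt_of_le_of_lt hC0 hK)
  have hoY : o ∈ Esub c o := o_mem_Esub c o
  -- rewrite the conjugate distance
  have heq : g • (g⁻¹ * c ^ p * g) • o = c ^ p • g • o := by
    rw [← mul_smul, ← mul_smul]
    congr 1
    group
  have hdxz : dist o ((g⁻¹ * c ^ p * g) • o) = dist (g • o) (c ^ p • g • o) := by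
    rw [← heq, dist_smul]
  have hdistz : dist (c ^ p • o) (c ^ p • g • o) = dist o (g • o) := dist_smul _ _ _
  -- projection points
  obtain ⟨px, hpx⟩ := proj_Esub_nonempty hproper c (g • o)
  have hopx : dist o px ≤ 2 * K := by
    have hbb : Bornology.IsBounded (projSet (Esub c o) {o} ∪ projSet (Esub c o) {g • o}) := by
      rw [projSet_singleton, projSet_singleton]
      exact (proj_isBounded _ o).union (proj_isBounded _ (g • o))
    have hmo : o ∈ projSet (Esub c o) {o} ∪ projSet (Esub c o) {g • o} := by
      left; rw [projSet_singleton]; exact mem_proj_self hoY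
    have hmx : px ∈ projSet (Esub c o) {o} ∪ projSet (Esub c o) {g • o} := by
      right; rw [projSet_singleton]; exact hpx
    exact (Metric.dist_le_diam_of_mem hbb hmo hmx).trans hg1
  have hpz : c ^ p • px ∈ proj (Esub c o) (c ^ p • g • o) := by
    have h1 := proj_smul_mem hpx (c ^ p)
    rwa [pow_smul_Esub] at h1
  have hozpz : dist (c ^ p • o) (c ^ p • px) ≤ 2 * K := by rw [dist_smul]; exact hopx
  have hpxpz : dist o (c ^ p • o) - 4 * K ≤ dist px (c ^ p • px) := by
    have t1 := dist_triangle o px (c ^ p • o)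
    have t2 := dist_triangle px (c ^ p • px) (c ^ p • o)
    have e := dist_comm (c ^ p • o) (c ^ p • px)
    linarith
  have hcp : 4 * K + C' + 1 ≤ dist o (c ^ p • o) := hP p hp
  -- geodesic from g•o to c^p•g•o
  obtain ⟨γ, hγ, hγ0, hγL⟩ := hgeo (g • o) (c ^ p • g • o)
  set L := dist (g • o) (c ^ p • g • o) with hLdef
  have hLnn : (0 : ℝ) ≤ L := dist_nonneg
  set S : Set ℝ := Set.Icc 0 L ∩ (fun t => Metric.infDist (γ t) (Esub c o)) ⁻¹' Set.Iic C'
    with hSdef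
  have hγcont : ContinuousOn γ (Set.Icc 0 L) := by
    have hlip : LipschitzOnWith 1 γ (Set.Icc 0 L) :=
      LipschitzOnWith.of_dist_le_mul fun s hs t ht => by
        rw [hγ s hs t ht, NNReal.coe_one, one_mul, Real.dist_eq]
    exact hlip.continuousOn
  have hScl : IsClosed S :=
    ((Metric.continuous_infDist_pt (Esub c o)).comp_continuousOn
      hγcont).preimage_isClosed_of_isClosed isClosed_Icc isClosed_Iic
  have hSbddB : BddBelow S := ⟨0, fun t ht => ht.1.1⟩
  have hSbddA : BddAbove S := ⟨L, fun t ht => ht.1.2⟩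
  have hSne : S.Nonempty := by
    by_contra hne
    have hout : ∀ t ∈ Set.Icc 0 L, C' ≤ Metric.infDist (γ t) ((1 : G) • Esub c o) := by
      intro t ht
      rw [one_smul]
      by_contra hlt
      push_neg at hlt
      exact hne ⟨t, ht, hlt.le⟩
    have hdiam := hBGI 1 γ 0 L hγ hout
    rw [one_smul] at hdiam
    have hbd := projSet_geo_isBounded (Esub c o) hγ
    have hm1 : px ∈ projSet (Esub c o) (γ '' Set.Icc 0 L) :=
      mem_projSet_of_mem ⟨0, ⟨le_refl 0, hLnn⟩, rfl⟩ (by rw [hγ0]; exact hpx)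
    have hm2 : c ^ p • px ∈ projSet (Esub c o) (γ '' Set.Icc 0 L) :=
      mem_projSet_of_mem ⟨L, ⟨hLnn, le_refl L⟩, rfl⟩ (by rw [hγL]; exact hpz)
    have := Metric.dist_le_diam_of_mem hbd hm1 hm2
    linarith
  set t₁ := sInf S with ht₁def
  set t₂ := sSup S with ht₂def
  have ht₁S : t₁ ∈ S := hScl.csInf_mem hSne hSbddB
  have ht₂S : t₂ ∈ S := hScl.csSup_mem hSne hSbddA
  have ht₁₂ : t₁ ≤ t₂ := csInf_le hSbddB ht₂S
  have ht₁0 : 0 ≤ t₁ := ht₁S.1.1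
  have ht₂L : t₂ ≤ L := ht₂S.1.2
  have ht₁L : t₁ ≤ L := le_trans ht₁₂ ht₂L
  have ht₂0 : 0 ≤ t₂ := le_trans ht₁0 ht₁₂
  have hinf₁ : Metric.infDist (γ t₁) (Esub c o) ≤ C' := ht₁S.2
  have hinf₂ : Metric.infDist (γ t₂) (Esub c o) ≤ C' := ht₂S.2
  -- Claim 1 : γ t₁ is 2C'-close to px
  have claim1 : dist (γ t₁) px ≤ 2 * C' := by
    rcases eq_or_lt_of_le ht₁0 with h0 | h0
    · have hx1 : γ t₁ = g • o := by rw [← h0]; exact hγ0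
      rw [hx1]
      rw [hx1] at hinf₁
      rw [hpx.2]
      linarith
    · refine real_le_of_forall_pos_le_add fun ε hε => ?_
      set δ := min (ε / 2) t₁ with hδdef
      have hδ0 : 0 < δ := lt_min (by linarith) h0
      have hδε : δ ≤ ε / 2 := min_le_left _ _
      have hδt₁ : δ ≤ t₁ := min_le_right _ _
      set t' := t₁ - δ with ht'def
      have ht'0 : 0 ≤ t' := by rw [ht'def]; linarith
      have ht'L : t' ≤ L := by rw [ht'def]; linarith
      have hsub : IsGeodesicOn γ 0 t' := fun s hs u hu =>
        hγ s ⟨hs.1, le_trans hs.2 ht'L⟩ u ⟨hu.1, le_trans hu.2 ht'L⟩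
      have hout : ∀ t ∈ Set.Icc 0 t', C' ≤ Metric.infDist (γ t) ((1 : G) • Esub c o) := by
        intro t ht
        rw [one_smul]
        by_contra hlt
        push_neg at hlt
        have htS : t ∈ S := ⟨⟨ht.1, le_trans ht.2 ht'L⟩, hlt.le⟩
        have h5 := csInf_le hSbddB htS
        have h6 : t ≤ t' := ht.2
        rw [ht'def] at h6
        rw [← ht₁def] at h5
        linarith
      have hdiam := hBGI 1 γ 0 t' hsub hout
      rw [one_smul] at hdiam
      obtain ⟨q, hq⟩ := proj_Esub_nonempty hproper c (γ t')
      have hbd := projSet_geo_isBounded (Esub c o) hsub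
      have hm1 : px ∈ projSet (Esub c o) (γ '' Set.Icc 0 t') :=
        mem_projSet_of_mem ⟨0, ⟨le_refl 0, ht'0⟩, rfl⟩ (by rw [hγ0]; exact hpx)
      have hm2 : q ∈ projSet (Esub c o) (γ '' Set.Icc 0 t') :=
        mem_projSet_of_mem ⟨t', ⟨ht'0, le_refl t'⟩, rfl⟩ hq
      have hq1 : dist px q ≤ C' := le_trans (Metric.dist_le_diam_of_mem hbd hm1 hm2) hdiam
      have hd11 : dist (γ t₁) (γ t') = δ := by
        rw [hγ t₁ ⟨ht₁0, ht₁L⟩ t' ⟨ht'0, ht'L⟩, ht'def]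
        rw [show t₁ - (t₁ - δ) = δ by ring, abs_of_pos hδ0]
      have hq2 : dist (γ t') q ≤ C' + δ := by
        have h1 : Metric.infDist (γ t') (Esub c o) ≤
            Metric.infDist (γ t₁) (Esub c o) + dist (γ t') (γ t₁) :=
          Metric.infDist_le_infDist_add_dist
        rw [dist_comm (γ t') (γ t₁), hd11] at h1
        rw [hq.2]
        linarith
      have tr1 := dist_triangle (γ t₁) (γ t') px
      have tr2 := dist_triangle (γ t') q px
      have hcm : dist q px = dist px q := dist_comm _ _
      linarith
  -- Claim 2 : γ t₂ is 2C'-close to c^p • px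
  have claim2 : dist (γ t₂) (c ^ p • px) ≤ 2 * C' := by
    rcases eq_or_lt_of_le ht₂L with hL2 | hL2
    · have hz2 : γ t₂ = c ^ p • g • o := by rw [hL2]; exact hγL
      rw [hz2]
      rw [hz2] at hinf₂
      rw [hpz.2]
      linarith
    · refine real_le_of_forall_pos_le_add fun ε hε => ?_
      set δ := min (ε / 2) (L - t₂) with hδdef
      have hδ0 : 0 < δ := lt_min (by linarith) (by linarith)
      have hδε : δ ≤ ε / 2 := min_le_left _ _
      have hδt₂ : δ ≤ L - t₂ := min_le_right _ _
      set t' := t₂ + δ with ht'def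
      have ht'0 : 0 ≤ t' := by rw [ht'def]; linarith
      have ht'L : t' ≤ L := by rw [ht'def]; linarith
      have hsub : IsGeodesicOn γ t' L := fun s hs u hu =>
        hγ s ⟨le_trans ht'0 hs.1, hs.2⟩ u ⟨le_trans ht'0 hu.1, hu.2⟩
      have hout : ∀ t ∈ Set.Icc t' L, C' ≤ Metric.infDist (γ t) ((1 : G) • Esub c o) := by
        intro t ht
        rw [one_smul]
        by_contra hlt
        push_neg at hlt
        have htS : t ∈ S := ⟨⟨le_trans ht'0 ht.1, ht.2⟩, hlt.le⟩
        have h5 := le_csSup hSbddA htS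
        have h6 : t' ≤ t := ht.1
        rw [ht'def] at h6
        rw [← ht₂def] at h5
        linarith
      have hdiam := hBGI 1 γ t' L hsub hout
      rw [one_smul] at hdiam
      obtain ⟨q, hq⟩ := proj_Esub_nonempty hproper c (γ t')
      have hbd := projSet_geo_isBounded (Esub c o) hsub
      have hm1 : c ^ p • px ∈ projSet (Esub c o) (γ '' Set.Icc t' L) :=
        mem_projSet_of_mem ⟨L, ⟨ht'L, le_refl L⟩, rfl⟩ (by rw [hγL]; exact hpz)
      have hm2 : q ∈ projSet (Esub c o) (γ '' Set.Icc t' L) :=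
        mem_projSet_of_mem ⟨t', ⟨le_refl t', ht'L⟩, rfl⟩ hq
      have hq1 : dist (c ^ p • px) q ≤ C' :=
        le_trans (Metric.dist_le_diam_of_mem hbd hm1 hm2) hdiam
      have hd11 : dist (γ t₂) (γ t') = δ := by
        rw [hγ t₂ ⟨ht₂0, ht₂L⟩ t' ⟨ht'0, ht'L⟩, ht'def]
        rw [show t₂ - (t₂ + δ) = -δ by ring, abs_neg, abs_of_pos hδ0]
      have hq2 : dist (γ t') q ≤ C' + δ := by
        have h1 : Metric.infDist (γ t') (Esub c o) ≤
            Metric.infDist (γ t₂) (Esub c o) + dist (γ t') (γ t₂) :=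
          Metric.infDist_le_infDist_add_dist
        rw [dist_comm (γ t') (γ t₂), hd11] at h1
        rw [hq.2]
        linarith
      have tr1 := dist_triangle (γ t₂) (γ t') (c ^ p • px)
      have tr2 := dist_triangle (γ t') q (c ^ p • px)
      have hcm : dist q (c ^ p • px) = dist (c ^ p • px) q := dist_comm _ _
      linarith
  -- distances along the geodesic
  have hd01 : dist (g • o) (γ t₁) = t₁ := by
    have h1 := hγ 0 ⟨le_refl 0, hLnn⟩ t₁ ⟨ht₁0, ht₁L⟩
    rw [hγ0] at h1
    rw [h1, zero_sub, abs_neg, abs_of_nonneg ht₁0]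
  have hd12 : dist (γ t₁) (γ t₂) = t₂ - t₁ := by
    rw [hγ t₁ ⟨ht₁0, ht₁L⟩ t₂ ⟨ht₂0, ht₂L⟩, abs_sub_comm, abs_of_nonneg (by linarith)]
  have hd2L : dist (γ t₂) (c ^ p • g • o) = L - t₂ := by
    have h1 := hγ t₂ ⟨ht₂0, ht₂L⟩ L ⟨hLnn, le_refl L⟩
    rw [hγL] at h1
    rw [h1, abs_sub_comm, abs_of_nonneg (by linarith)]
  -- endpoint estimates
  have hxpx : dist o (g • o) - 2 * K ≤ dist (g • o) px := by
    have t1 := dist_triangle o px (g • o)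
    have e := dist_comm px (g • o)
    linarith
  have hzpz : dist o (g • o) - 2 * K ≤ dist (c ^ p • g • o) (c ^ p • px) := by
    have t1 := dist_triangle (c ^ p • o) (c ^ p • px) (c ^ p • g • o)
    have e := dist_comm (c ^ p • px) (c ^ p • g • o)
    linarith
  -- triangle chains
  have A1 := dist_triangle (g • o) (γ t₁) px
  have A2 := dist_triangle4 px (γ t₁) (γ t₂) (c ^ p • px)
  have A3 := dist_triangle (c ^ p • g • o) (γ t₂) (c ^ p • px)
  have e1 : dist px (γ t₁) = dist (γ t₁) px := dist_comm _ _
  have e2 : dist (γ t₂) (c ^ p • px) = dist (c ^ p • px) (γ t₂) := dist_comm _ _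
  have e3 : dist (c ^ p • g • o) (γ t₂) = dist (γ t₂) (c ^ p • g • o) := dist_comm _ _
  constructor
  · rw [hdxz]
    rw [hd01] at A1
    rw [hd12] at A2
    rw [e3, hd2L] at A3
    linarith
  · rw [hdxz]
    have u1 := dist_triangle (g • o) o (c ^ p • g • o)
    have u2 := dist_triangle o (c ^ p • o) (c ^ p • g • o)
    have u3 := dist_comm (g • o) o
    linarith

end ACcogrowth
end

section
/- Let G act properly by isometries on a metric space X with basepoint o, and suppose G has purely exponential growth with rate δ > 0 and shell width Δ. Let B ⊆ X, let M ∈ ℕ, a ∈ ℝ, E ≥ 0, and let φ : G → B be a surjection such that #φ⁻¹(b) ≤ M for every b ∈ B and |d(o, φ(g)) − (2|g| + a)| ≤ E for every g ∈ G. Then B has purely exponential growth with rate δ/2: there exist Δ' > 0 and A ≥ 1 such that exp(tδ/2)/A ≤ #{b ∈ B : t < d(o,b) ≤ t + Δ'} ≤ A·exp(tδ/2) for all sufficiently large t. In particular, δ_B := limsup_{r→∞} (log #{b ∈ B : d(o,b) ≤ r})/r equals δ/2, and B is divergent: Σ_{b∈B} exp(−(δ/2)·d(o,b)) = ∞. 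-/
open Metric Set Filter Pointwise

namespace ACcogrowth

variable {X : Type*} [MetricSpace X]

variable {G : Type*} [Group G] [MulAction G X]

private lemma aux_ncard_le_mul_ncard_image {α β : Type*} {S : Set α} (hS : S.Finite)
    (f : α → β) (M : ℕ) (h : ∀ b : β, ({a ∈ S | f a = b}).ncard ≤ M) :
    S.ncard ≤ M * (f '' S).ncard := by
  classical
  calc S.ncard = hS.toFinset.card := by
        rw [← Set.ncard_coe_finset hS.toFinset, hS.coe_toFinset]
    _ ≤ M * (hS.toFinset.image f).card := by
        refine Finset.card_le_mul_card_image _ M (fun b _ => ?_)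
        have he : ↑(hS.toFinset.filter (fun a => f a = b)) = {a ∈ S | f a = b} := by
          ext a; simp [hS.mem_toFinset]
        have := Set.ncard_coe_finset (hS.toFinset.filter (fun a => f a = b))
        rw [he] at this
        rw [← this]
        exact h b
    _ = M * (f '' S).ncard := by
        congr 1
        rw [← Set.ncard_coe_finset (hS.toFinset.image f)]
        congr 1
        simp [Finset.coe_image, hS.coe_toFinset]

private lemma aux_ball_count {G X : Type*} [Group G] [MetricSpace X] [MulAction G X] (o : X)
    (hball : ∀ s : ℝ, {g : G | dist o (g • o) ≤ s}.Finite)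
    {δ Δ A₀ : ℝ} (hδ : 0 < δ) (hΔ : 0 < Δ)
    (hsh : ∀ r : ℝ, 0 ≤ r →
      (({g : G | r < dist o (g • o) ∧ dist o (g • o) ≤ r + Δ}).ncard : ℝ) ≤ A₀ * Real.exp (δ * r)) :
    ∃ C₂ : ℝ, 0 < C₂ ∧ ∀ s : ℝ, 0 ≤ s →
      (({g : G | dist o (g • o) ≤ s}).ncard : ℝ) ≤ C₂ * Real.exp (δ * s) := by
  have hA₀ : 0 ≤ A₀ := by
    have h0 := hsh 0 le_rfl
    have : (0:ℝ) ≤ A₀ * Real.exp (δ * 0) := le_trans (Nat.cast_nonneg _) h0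
    simpa using this
  set C₀ : ℝ := (({g : G | dist o (g • o) ≤ (0:ℝ)}).ncard : ℝ) with hC₀def
  have hC₀ : 0 ≤ C₀ := Nat.cast_nonneg _
  set x : ℝ := Real.exp (δ * Δ) with hxdef
  have hx : 1 < x := by
    rw [hxdef]
    exact Real.one_lt_exp_iff.2 (by positivity)
  have hxm : (0:ℝ) < x - 1 := by linarith
  have hdivnn : 0 ≤ A₀ * x / (x - 1) := div_nonneg (by positivity) hxm.le
  refine ⟨C₀ + A₀ * x / (x - 1) + 1, by linarith, ?_⟩
  have hstep : ∀ n : ℕ, (({g : G | dist o (g • o) ≤ (n:ℝ) * Δ}).ncard : ℝ) ≤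
      C₀ + ∑ k ∈ Finset.range n, A₀ * Real.exp (δ * ((k:ℝ) * Δ)) := by
    intro n
    induction n with
    | zero =>
      simp only [Nat.cast_zero, zero_mul, Finset.range_zero, Finset.sum_empty, add_zero]
      exact le_rfl
    | succ n ih =>
      have hsub : {g : G | dist o (g • o) ≤ ((n:ℕ)+1 : ℕ) * Δ} ⊆
          {g : G | dist o (g • o) ≤ (n:ℝ) * Δ} ∪
          {g : G | (n:ℝ) * Δ < dist o (g • o) ∧ dist o (g • o) ≤ (n:ℝ) * Δ + Δ} := by
        intro g hg
        simp only [Set.mem_setOf_eq, Set.mem_union] at hg ⊢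
        by_cases h : dist o (g • o) ≤ (n:ℝ) * Δ
        · exact Or.inl h
        · push_cast at hg
          exact Or.inr ⟨lt_of_not_ge h, by linarith⟩
      have hfin : ({g : G | dist o (g • o) ≤ (n:ℝ) * Δ} ∪
          {g : G | (n:ℝ) * Δ < dist o (g • o) ∧ dist o (g • o) ≤ (n:ℝ) * Δ + Δ}).Finite := by
        refine ((hball ((n:ℝ) * Δ)).union ?_)
        exact (hball ((n:ℝ) * Δ + Δ)).subset (fun g hg => hg.2)
      have h1 : ({g : G | dist o (g • o) ≤ ((n:ℕ)+1 : ℕ) * Δ}).ncard ≤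
          ({g : G | dist o (g • o) ≤ (n:ℝ) * Δ}).ncard +
          ({g : G | (n:ℝ) * Δ < dist o (g • o) ∧ dist o (g • o) ≤ (n:ℝ) * Δ + Δ}).ncard :=
        le_trans (Set.ncard_le_ncard hsub hfin) (Set.ncard_union_le _ _)
      have h2 := hsh ((n:ℝ) * Δ) (by positivity)
      rw [Finset.sum_range_succ]
      push_cast at h1 ⊢
      calc (({g : G | dist o (g • o) ≤ ((n:ℝ)+1) * Δ}).ncard : ℝ)
          ≤ (({g : G | dist o (g • o) ≤ (n:ℝ) * Δ}).ncard : ℝ) +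
            (({g : G | (n:ℝ) * Δ < dist o (g • o) ∧ dist o (g • o) ≤ (n:ℝ) * Δ + Δ}).ncard : ℝ) := by
            exact_mod_cast h1
        _ ≤ (C₀ + ∑ k ∈ Finset.range n, A₀ * Real.exp (δ * ((k:ℝ) * Δ))) + A₀ * Real.exp (δ * ((n:ℝ) * Δ)) := by
            exact add_le_add ih h2
        _ = C₀ + (∑ k ∈ Finset.range n, A₀ * Real.exp (δ * ((k:ℝ) * Δ)) + A₀ * Real.exp (δ * ((n:ℝ) * Δ))) := by ring
  intro s hs
  set n : ℕ := ⌈s / Δ⌉₊ with hndef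
  have h1 : s ≤ (n:ℝ) * Δ := by
    rw [← div_le_iff₀ hΔ]
    exact Nat.le_ceil _
  have h2 : (n:ℝ) * Δ ≤ s + Δ := by
    have := (Nat.ceil_lt_add_one (div_nonneg hs hΔ.le)).le
    calc (n:ℝ) * Δ ≤ (s / Δ + 1) * Δ := by
          exact mul_le_mul_of_nonneg_right this hΔ.le
      _ = s + Δ := by field_simp
  have hmono : (({g : G | dist o (g • o) ≤ s}).ncard : ℝ) ≤
      (({g : G | dist o (g • o) ≤ (n:ℝ) * Δ}).ncard : ℝ) := by
    exact_mod_cast Set.ncard_le_ncard (fun g hg => le_trans hg h1) (hball _)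
  have hsum : ∑ k ∈ Finset.range n, A₀ * Real.exp (δ * ((k:ℝ) * Δ)) ≤
      A₀ * x / (x - 1) * Real.exp (δ * s) := by
    have hterm : ∀ k : ℕ, Real.exp (δ * ((k:ℝ) * Δ)) = x ^ k := by
      intro k
      rw [hxdef, ← Real.exp_nat_mul]
      congr 1
      ring
    calc ∑ k ∈ Finset.range n, A₀ * Real.exp (δ * ((k:ℝ) * Δ))
        = A₀ * ∑ k ∈ Finset.range n, x ^ k := by
          rw [Finset.mul_sum]
          exact Finset.sum_congr rfl (fun k _ => by rw [hterm k])
      _ = A₀ * ((x ^ n - 1) / (x - 1)) := by rw [geom_sum_eq (ne_of_gt hx)]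
      _ ≤ A₀ * (x ^ n / (x - 1)) := by
          apply mul_le_mul_of_nonneg_left _ hA₀
          apply div_le_div_of_nonneg_right (by linarith) (by linarith)
      _ ≤ A₀ * (x * Real.exp (δ * s) / (x - 1)) := by
          apply mul_le_mul_of_nonneg_left _ hA₀
          apply div_le_div_of_nonneg_right _ (by linarith)
          have : x ^ n = Real.exp (δ * ((n:ℝ) * Δ)) := (hterm n).symm
          rw [this, hxdef, ← Real.exp_add]
          exact Real.exp_le_exp.2 (by nlinarith)
      _ = A₀ * x / (x - 1) * Real.exp (δ * s) := by ring
  have hC₀s : C₀ ≤ C₀ * Real.exp (δ * s) := by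
    nlinarith [Real.one_le_exp (by positivity : (0:ℝ) ≤ δ * s)]
  have := hstep n
  have hfin : (({g : G | dist o (g • o) ≤ (n:ℝ) * Δ}).ncard : ℝ) ≤
      C₀ + A₀ * x / (x - 1) * Real.exp (δ * s) := le_trans this (by linarith)
  nlinarith [Real.exp_pos (δ * s), hmono]

/-- **Lemma.** If `G` has purely exponential growth with rate `δ` and `φ : G → B ⊆ X` is a
bounded-to-one surjection with `|d(o, φ(g)) − (2|g| + a)| ≤ E`, then `B` has purely
exponential growth with rate `δ/2`; in particular `δ_B = δ/2` and `B` is divergent. -/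
theorem image_purely_exponential_half_rate
    {G : Type*} [Group G] {X : Type*} [MetricSpace X]
    [MulAction G X] [IsIsometricSMul G X] (o : X)
    (hproper : ProperAction G o)
    (δ Δ A₀ : ℝ)
    (hPE : PurelyExponentialWith G o δ Δ A₀)
    (B : Set X) (M : ℕ) (a E : ℝ) (hE : 0 ≤ E)
    (φ : G → X)
    (hφB : ∀ g : G, φ g ∈ B)
    (hφsurj : ∀ b ∈ B, ∃ g : G, φ g = b)
    (hfib : ∀ b : X, ({g : G | φ g = b}).ncard ≤ M)
    (hnorm : ∀ g : G, |dist o (φ g) - (2 * dist o (g • o) + a)| ≤ E) :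
    (∃ Δ' : ℝ, 0 < Δ' ∧ ∃ A : ℝ, 1 ≤ A ∧ ∃ T : ℝ, ∀ t ≥ T,
      Real.exp (t * δ / 2) / A ≤
          (({b ∈ B | t < dist o b ∧ dist o b ≤ t + Δ'}).ncard : ℝ) ∧
      (({b ∈ B | t < dist o b ∧ dist o b ≤ t + Δ'}).ncard : ℝ) ≤
          A * Real.exp (t * δ / 2)) ∧
    growthRateX o B = δ / 2 ∧
    ¬ Summable fun b : B => Real.exp (-(δ / 2) * dist o (b : X)) := by
  classical
  obtain ⟨hδ, hΔ, hA₁, hshG⟩ := hPE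
  have hball : ∀ s : ℝ, {g : G | dist o (g • o) ≤ s}.Finite := fun s => hproper o s
  have hA₀pos : (0:ℝ) < A₀ := lt_of_lt_of_le one_pos hA₁
  -- fibers of φ are finite
  have hfibfin : ∀ b : X, {g : G | φ g = b}.Finite := by
    intro b
    apply (hball ((dist o b - a + E)/2)).subset
    intro g hg
    simp only [Set.mem_setOf_eq] at hg ⊢
    have h := abs_le.1 (hnorm g)
    rw [hg] at h
    linarith [h.1]
  have hM1 : 1 ≤ M := by
    have h1 : (1:G) ∈ {g : G | φ g = φ 1} := rfl
    have := (Set.ncard_pos (hfibfin (φ 1))).2 ⟨1, h1⟩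
    exact le_trans this (hfib (φ 1))
  have hMpos : (0:ℝ) < (M:ℕ) := by exact_mod_cast lt_of_lt_of_le Nat.zero_lt_one hM1
  obtain ⟨C₂, hC₂, hbc⟩ := aux_ball_count o hball hδ hΔ (fun r hr => (hshG r hr).2)
  set Δ' : ℝ := 2*Δ + 2*E with hΔ'def
  have hΔ'pos : 0 < Δ' := by rw [hΔ'def]; linarith
  set T : ℝ := |a| + E + 1 with hTdef
  set A : ℝ := A₀ * M * Real.exp (δ * (a - E) / 2) + C₂ * Real.exp (δ * (Δ' + E - a) / 2) + 1
    with hAdef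
  have hterm1 : 0 < A₀ * M * Real.exp (δ * (a - E) / 2) := by positivity
  have hterm2 : 0 < C₂ * Real.exp (δ * (Δ' + E - a) / 2) := by positivity
  have hA1 : 1 ≤ A := by rw [hAdef]; linarith
  have hApos : 0 < A := lt_of_lt_of_le one_pos hA1
  -- balls in B are finite, being contained in images of balls in G
  have hBsub : ∀ r : ℝ, {b ∈ B | dist o b ≤ r} ⊆ φ '' {g : G | dist o (g • o) ≤ (r - a + E)/2} := by
    rintro r b ⟨hbB, hbd⟩
    obtain ⟨g, hg⟩ := hφsurj b hbB
    refine ⟨g, ?_, hg⟩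
    have h := abs_le.1 (hnorm g); rw [hg] at h
    simp only [Set.mem_setOf_eq]
    linarith [h.1]
  have hBballfin : ∀ r : ℝ, {b ∈ B | dist o b ≤ r}.Finite := fun r =>
    ((hball ((r - a + E)/2)).image φ).subset (hBsub r)
  have hBballcount : ∀ r : ℝ, a - E ≤ r →
      (({b ∈ B | dist o b ≤ r}).ncard : ℝ) ≤ C₂ * Real.exp (δ * (E - a) / 2) * Real.exp (r * δ / 2) := by
    intro r hr
    have h1 : ({b ∈ B | dist o b ≤ r}).ncard ≤ ({g : G | dist o (g • o) ≤ (r - a + E)/2}).ncard :=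
      le_trans (Set.ncard_le_ncard (hBsub r) ((hball _).image φ)) (Set.ncard_image_le (hball _))
    have h2 := hbc ((r - a + E)/2) (by linarith)
    have h3 : Real.exp (δ * ((r - a + E)/2)) = Real.exp (δ * (E - a) / 2) * Real.exp (r * δ / 2) := by
      rw [← Real.exp_add]; congr 1; ring
    calc (({b ∈ B | dist o b ≤ r}).ncard : ℝ) ≤ (({g : G | dist o (g • o) ≤ (r - a + E)/2}).ncard : ℝ) := by
          exact_mod_cast h1
      _ ≤ C₂ * Real.exp (δ * ((r - a + E)/2)) := h2
      _ = C₂ * Real.exp (δ * (E - a) / 2) * Real.exp (r * δ / 2) := by rw [h3]; ring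
  -- key shell estimate
  have key : ∀ t : ℝ, T ≤ t →
      Real.exp (t * δ / 2) / A ≤ (({b ∈ B | t < dist o b ∧ dist o b ≤ t + Δ'}).ncard : ℝ) ∧
      (({b ∈ B | t < dist o b ∧ dist o b ≤ t + Δ'}).ncard : ℝ) ≤ A * Real.exp (t * δ / 2) := by
    intro t ht
    have hta : a - E ≤ t := by
      have h1 := le_abs_self a
      rw [hTdef] at ht
      linarith
    have hSBfin : ({b ∈ B | t < dist o b ∧ dist o b ≤ t + Δ'}).Finite :=
      (hBballfin (t + Δ')).subset (fun b hb => ⟨hb.1, hb.2.2⟩)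
    constructor
    · -- lower bound
      set r : ℝ := (t + E - a)/2 with hrdef
      have hr0 : 0 ≤ r := by rw [hrdef]; linarith
      have hlo := (hshG r hr0).1
      have hSGfin : ({g : G | r < dist o (g • o) ∧ dist o (g • o) ≤ r + Δ}).Finite :=
        (hball (r + Δ)).subset (fun g hg => hg.2)
      have hmaps : φ '' {g : G | r < dist o (g • o) ∧ dist o (g • o) ≤ r + Δ} ⊆
          {b ∈ B | t < dist o b ∧ dist o b ≤ t + Δ'} := by
        rintro b ⟨g, ⟨hg1, hg2⟩, rfl⟩
        have h := abs_le.1 (hnorm g)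
        have h2r : 2 * r = t + E - a := by rw [hrdef]; ring
        refine ⟨hφB g, by linarith [h.1], by rw [hΔ'def]; linarith [h.2]⟩
      have hcount : (({g : G | r < dist o (g • o) ∧ dist o (g • o) ≤ r + Δ}).ncard : ℝ) ≤
          (M:ℕ) * (({b ∈ B | t < dist o b ∧ dist o b ≤ t + Δ'}).ncard : ℝ) := by
        have h1 := aux_ncard_le_mul_ncard_image hSGfin φ M (fun b =>
          le_trans (Set.ncard_le_ncard (fun g hg => hg.2) (hfibfin b)) (hfib b))
        have h2 := Set.ncard_le_ncard hmaps hSBfin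
        have h3 := le_trans h1 (Nat.mul_le_mul_left M h2)
        exact_mod_cast h3
      have h3 : Real.exp (δ * r) / (A₀ * M) ≤
          (({b ∈ B | t < dist o b ∧ dist o b ≤ t + Δ'}).ncard : ℝ) := by
        rw [div_le_iff₀ (by positivity)]
        have h4 : Real.exp (δ * r) ≤ A₀ *
            (({g : G | r < dist o (g • o) ∧ dist o (g • o) ≤ r + Δ}).ncard : ℝ) := by
          rw [div_le_iff₀ hA₀pos] at hlo
          linarith
        calc Real.exp (δ * r) ≤ A₀ *
              (({g : G | r < dist o (g • o) ∧ dist o (g • o) ≤ r + Δ}).ncard : ℝ) := h4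
          _ ≤ A₀ * ((M:ℕ) * (({b ∈ B | t < dist o b ∧ dist o b ≤ t + Δ'}).ncard : ℝ)) := by
              exact mul_le_mul_of_nonneg_left hcount hA₀pos.le
          _ = (({b ∈ B | t < dist o b ∧ dist o b ≤ t + Δ'}).ncard : ℝ) * (A₀ * M) := by ring
      refine le_trans ?_ h3
      rw [div_le_div_iff₀ hApos (by positivity)]
      have he : Real.exp (t * δ / 2) = Real.exp (δ * r) * Real.exp (δ * (a - E) / 2) := by
        rw [← Real.exp_add]; congr 1; rw [hrdef]; ring
      rw [he]
      have hAge : A₀ * M * Real.exp (δ * (a - E) / 2) ≤ A := by rw [hAdef]; linarith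
      calc Real.exp (δ * r) * Real.exp (δ * (a - E) / 2) * (A₀ * M)
          = (A₀ * M * Real.exp (δ * (a - E) / 2)) * Real.exp (δ * r) := by ring
        _ ≤ A * Real.exp (δ * r) := mul_le_mul_of_nonneg_right hAge (Real.exp_pos _).le
        _ = Real.exp (δ * r) * A := by ring
    · -- upper bound
      have h1 : ({b ∈ B | t < dist o b ∧ dist o b ≤ t + Δ'}) ⊆ {b ∈ B | dist o b ≤ t + Δ'} :=
        fun b hb => ⟨hb.1, hb.2.2⟩
      have h2 : (({b ∈ B | t < dist o b ∧ dist o b ≤ t + Δ'}).ncard : ℝ) ≤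
          (({b ∈ B | dist o b ≤ t + Δ'}).ncard : ℝ) := by
        exact_mod_cast Set.ncard_le_ncard h1 (hBballfin (t + Δ'))
      have h3 := hBballcount (t + Δ') (by linarith)
      have h4 : Real.exp ((t + Δ') * δ / 2) = Real.exp (Δ' * δ / 2) * Real.exp (t * δ / 2) := by
        rw [← Real.exp_add]; ring_nf
      have h5 : C₂ * Real.exp (δ * (E - a) / 2) * Real.exp (Δ' * δ / 2) ≤ A := by
        rw [hAdef]
        have : C₂ * Real.exp (δ * (E - a) / 2) * Real.exp (Δ' * δ / 2) =
            C₂ * Real.exp (δ * (Δ' + E - a) / 2) := by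
          rw [mul_assoc, ← Real.exp_add]
          congr 2
          ring
        rw [this]
        linarith
      calc (({b ∈ B | t < dist o b ∧ dist o b ≤ t + Δ'}).ncard : ℝ)
          ≤ C₂ * Real.exp (δ * (E - a) / 2) * Real.exp ((t + Δ') * δ / 2) := le_trans h2 h3
        _ = C₂ * Real.exp (δ * (E - a) / 2) * Real.exp (Δ' * δ / 2) * Real.exp (t * δ / 2) := by
            rw [h4]; ring
        _ ≤ A * Real.exp (t * δ / 2) :=
            mul_le_mul_of_nonneg_right h5 (Real.exp_pos _).le
  refine ⟨⟨Δ', hΔ'pos, A, hA1, T, fun t ht => key t ht⟩, ?_, ?_⟩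
  · -- growth rate
    set c₁ : ℝ := Real.exp (-(Δ' * δ / 2)) / A with hc₁def
    set c₂ : ℝ := C₂ * Real.exp (δ * (E - a) / 2) with hc₂def
    have hc₁ : 0 < c₁ := by rw [hc₁def]; positivity
    have hc₂ : 0 < c₂ := by rw [hc₂def]; positivity
    have hNb : ∀ r : ℝ, T + Δ' + 1 ≤ r →
        c₁ * Real.exp (r * δ / 2) ≤ (({b ∈ B | dist o b ≤ r}).ncard : ℝ) ∧
        (({b ∈ B | dist o b ≤ r}).ncard : ℝ) ≤ c₂ * Real.exp (r * δ / 2) := by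
      intro r hr
      constructor
      · have h1 := (key (r - Δ') (by linarith)).1
        have h2 : ({b ∈ B | r - Δ' < dist o b ∧ dist o b ≤ r - Δ' + Δ'}) ⊆
            {b ∈ B | dist o b ≤ r} := by
          rintro b ⟨hbB, _, hb2⟩
          exact ⟨hbB, by linarith⟩
        have h3 : (({b ∈ B | r - Δ' < dist o b ∧ dist o b ≤ r - Δ' + Δ'}).ncard : ℝ) ≤
            (({b ∈ B | dist o b ≤ r}).ncard : ℝ) := by
          exact_mod_cast Set.ncard_le_ncard h2 (hBballfin r)
        have h4 : c₁ * Real.exp (r * δ / 2) = Real.exp ((r - Δ') * δ / 2) / A := by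
          rw [hc₁def, div_mul_eq_mul_div, ← Real.exp_add]
          congr 2
          ring
        rw [h4]
        exact le_trans h1 h3
      · have hta : a - E ≤ r := by
          have h1 := le_abs_self a
          rw [hTdef] at hr
          rw [hΔ'def] at hr
          linarith
        exact hBballcount r hta
    have hlow : Tendsto (fun r : ℝ => Real.log c₁ / r + δ/2) atTop (nhds (δ/2)) := by
      have h := (tendsto_const_nhds (x := Real.log c₁) (f := atTop)).div_atTop (tendsto_id (α := ℝ))
      have h2 := h.add (tendsto_const_nhds (x := δ/2) (f := (atTop : Filter ℝ)))
      simpa using h2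
    have hhigh : Tendsto (fun r : ℝ => Real.log c₂ / r + δ/2) atTop (nhds (δ/2)) := by
      have h := (tendsto_const_nhds (x := Real.log c₂) (f := atTop)).div_atTop (tendsto_id (α := ℝ))
      have h2 := h.add (tendsto_const_nhds (x := δ/2) (f := (atTop : Filter ℝ)))
      simpa using h2
    have hlim : Tendsto (fun r : ℝ => Real.log (({b ∈ B | dist o b ≤ r}).ncard) / r)
        atTop (nhds (δ/2)) := by
      refine tendsto_of_tendsto_of_tendsto_of_le_of_le' hlow hhigh ?_ ?_
      · filter_upwards [eventually_ge_atTop (max (T + Δ' + 1) 1)] with r hr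
        obtain ⟨h1, h2⟩ := hNb r (le_trans (le_max_left _ _) hr)
        have hrpos : (0:ℝ) < r := lt_of_lt_of_le one_pos (le_trans (le_max_right _ _) hr)
        have hNpos : (0:ℝ) < (({b ∈ B | dist o b ≤ r}).ncard : ℝ) :=
          lt_of_lt_of_le (by positivity) h1
        have hl := Real.log_le_log (by positivity) h1
        rw [Real.log_mul hc₁.ne' (Real.exp_pos _).ne', Real.log_exp] at hl
        have h5 : (Real.log c₁ + r * δ / 2) / r ≤ Real.log (({b ∈ B | dist o b ≤ r}).ncard) / r := by
          gcongr
        calc Real.log c₁ / r + δ/2 = (Real.log c₁ + r * δ / 2) / r := by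
              field_simp
          _ ≤ _ := h5
      · filter_upwards [eventually_ge_atTop (max (T + Δ' + 1) 1)] with r hr
        obtain ⟨h1, h2⟩ := hNb r (le_trans (le_max_left _ _) hr)
        have hrpos : (0:ℝ) < r := lt_of_lt_of_le one_pos (le_trans (le_max_right _ _) hr)
        have hNpos : (0:ℝ) < (({b ∈ B | dist o b ≤ r}).ncard : ℝ) :=
          lt_of_lt_of_le (by positivity) h1
        have hl := Real.log_le_log hNpos h2
        rw [Real.log_mul hc₂.ne' (Real.exp_pos _).ne', Real.log_exp] at hl
        have h5 : Real.log (({b ∈ B | dist o b ≤ r}).ncard) / r ≤ (Real.log c₂ + r * δ / 2) / r := by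
          gcongr
        calc Real.log (({b ∈ B | dist o b ≤ r}).ncard) / r ≤ (Real.log c₂ + r * δ / 2) / r := h5
          _ = Real.log c₂ / r + δ/2 := by
              field_simp
    unfold growthRateX
    exact hlim.limsup_eq
  · -- divergence
    intro hsum
    set c : ℝ := Real.exp (-(δ/2) * Δ') / A with hcdef
    have hc : 0 < c := by rw [hcdef]; positivity
    set Sb : ℕ → Set B := fun k =>
      {b : B | T + k * Δ' < dist o (b : X) ∧ dist o (b : X) ≤ T + k * Δ' + Δ'} with hSbdef
    have hSk : ∀ k : ℕ, Subtype.val '' Sb k =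
        {b ∈ B | T + k * Δ' < dist o b ∧ dist o b ≤ T + k * Δ' + Δ'} := by
      intro k
      ext b
      constructor
      · rintro ⟨⟨b', hb'⟩, hmem, rfl⟩
        exact ⟨hb', hmem⟩
      · rintro ⟨hbB, hmem⟩
        exact ⟨⟨b, hbB⟩, hmem, rfl⟩
    have hSbfin : ∀ k : ℕ, (Sb k).Finite := by
      intro k
      have h1 : ({b ∈ B | T + k * Δ' < dist o b ∧ dist o b ≤ T + k * Δ' + Δ'}).Finite :=
        (hBballfin (T + k * Δ' + Δ')).subset (fun b hb => ⟨hb.1, hb.2.2⟩)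
      have h2 : Sb k = (Subtype.val : B → X) ⁻¹'
          {b ∈ B | T + k * Δ' < dist o b ∧ dist o b ≤ T + k * Δ' + Δ'} := by
        ext ⟨b, hbB⟩
        simp [hSbdef, hbB]
      rw [h2]
      exact h1.preimage Subtype.val_injective.injOn
    have hSbcard : ∀ k : ℕ, Real.exp ((T + k * Δ') * δ / 2) / A ≤ ((Sb k).ncard : ℝ) := by
      intro k
      have hkT : T ≤ T + k * Δ' := by
        have : (0:ℝ) ≤ k * Δ' := by positivity
        linarith
      have h1 := (key (T + k * Δ') hkT).1
      have h2 : (Sb k).ncard =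
          ({b ∈ B | T + k * Δ' < dist o b ∧ dist o b ≤ T + k * Δ' + Δ'}).ncard := by
        rw [← hSk k, Set.ncard_image_of_injective _ Subtype.val_injective]
      rw [h2]
      exact h1
    set F : ℕ → Finset B := fun k => (hSbfin k).toFinset with hFdef
    have hshellsum : ∀ k : ℕ, c ≤ ∑ b ∈ F k, Real.exp (-(δ / 2) * dist o (b : X)) := by
      intro k
      have hbound : ∀ b ∈ F k, Real.exp (-(δ/2) * (T + k * Δ' + Δ')) ≤
          Real.exp (-(δ / 2) * dist o (b : X)) := by
        intro b hb
        rw [hFdef] at hb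
        simp only [Set.Finite.mem_toFinset] at hb
        apply Real.exp_le_exp.2
        have h2 := hb.2
        have := mul_le_mul_of_nonpos_left h2 (by linarith : -(δ/2) ≤ 0)
        linarith
      have hcard := Finset.card_nsmul_le_sum (F k)
        (fun b => Real.exp (-(δ / 2) * dist o (b : X)))
        (Real.exp (-(δ/2) * (T + k * Δ' + Δ'))) hbound
      have hcardeq : ((F k).card : ℝ) = ((Sb k).ncard : ℝ) := by
        have h : (Sb k).ncard = (F k).card := by
          rw [hFdef]
          conv_lhs => rw [← (hSbfin k).coe_toFinset]
          rw [Set.ncard_coe_finset]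
        rw [h]
      rw [nsmul_eq_mul] at hcard
      have h3 : Real.exp ((T + k * Δ') * δ / 2) / A * Real.exp (-(δ/2) * (T + k * Δ' + Δ')) ≤
          ((F k).card : ℝ) * Real.exp (-(δ/2) * (T + k * Δ' + Δ')) := by
        apply mul_le_mul_of_nonneg_right _ (Real.exp_pos _).le
        rw [hcardeq]
        exact hSbcard k
      have h4 : Real.exp ((T + k * Δ') * δ / 2) / A * Real.exp (-(δ/2) * (T + k * Δ' + Δ')) = c := by
        rw [hcdef, div_mul_eq_mul_div, ← Real.exp_add]
        congr 2
        ring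
      rw [h4] at h3
      exact le_trans h3 hcard
    -- pairwise disjointness of the F k
    have hFdisj : ∀ k l : ℕ, k ≠ l → Disjoint (F k) (F l) := by
      have hmain : ∀ k l : ℕ, k < l → Disjoint (F k) (F l) := by
        intro k l hkl
        rw [Finset.disjoint_left]
        intro b hbk hbl
        rw [hFdef] at hbk hbl
        simp only [Set.Finite.mem_toFinset] at hbk hbl
        have h1 : (k:ℝ) + 1 ≤ (l:ℝ) := by exact_mod_cast hkl
        have h2 := hbk.2
        have h3 := hbl.1
        nlinarith [hΔ'pos]
      intro k l hkl
      rcases lt_or_gt_of_ne hkl with h | h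
      · exact hmain k l h
      · exact (hmain l k h).symm
    have hpartial : ∀ n : ℕ, (n:ℝ) * c ≤ ∑' b : B, Real.exp (-(δ / 2) * dist o (b : X)) := by
      intro n
      have hdisj' : ∀ k ∈ Finset.range n, ∀ l ∈ Finset.range n, k ≠ l →
          Disjoint (F k) (F l) := fun k _ l _ h => hFdisj k l h
      have hsum1 := Summable.sum_le_tsum ((Finset.range n).biUnion F)
        (fun b _ => (Real.exp_pos _).le) hsum
      rw [Finset.sum_biUnion] at hsum1
      · have h2 : (n:ℝ) * c ≤ ∑ k ∈ Finset.range n, ∑ b ∈ F k,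
            Real.exp (-(δ / 2) * dist o (b : X)) := by
          have := Finset.card_nsmul_le_sum (Finset.range n)
            (fun k => ∑ b ∈ F k, Real.exp (-(δ / 2) * dist o (b : X))) c
            (fun k _ => hshellsum k)
          rw [nsmul_eq_mul, Finset.card_range] at this
          exact this
        exact le_trans h2 hsum1
      · intro k hk l hl hkl
        exact hFdisj k l hkl
    obtain ⟨n, hn⟩ := exists_nat_gt ((∑' b : B, Real.exp (-(δ / 2) * dist o (b : X))) / c)
    have := hpartial n
    rw [div_lt_iff₀ hc] at hn
    linarith

end ACcogrowth
end
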